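/- Path independence of routing: let cap be a credit network on a finite type V, let σ_0 be a state, and let (s_1,t_1), …, (s_T,t_T) be a sequence of ordered pairs with s_i ≠ t_i. Suppose σ_0, σ_1, …, σ_T is a sequence of states in which each σ_i is obtained from σ_{i−1} by routing a unit payment from s_i to t_i along some feasible path. Then: (i) for any partial alternative execution σ'_0 = σ_0, σ'_1, …, σ'_{j−1} (j ≤ T), in which each σ'_i is obtained from σ'_{i−1} by routing a unit payment from s_i to t_i along some feasible path, the unit transaction (s_j,t_j) is feasible in σ'_{j−1}; and (ii) for any complete alternative execution σ'_0 = σ_0, σ'_1, …, σ'_T of the same transaction sequence, score σ'_T = score σ_T, and consequently for every pair (s,t) with s ≠ t the unit transaction (s,t) is feasible in σ'_T if and only if it is feasible in σ_T. -/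

import Mathlib

open Finset

/-- A state of a credit network with capacities `cap`: `σ u v + σ v u = cap u v`. -/
def IsState {V : Type*} (cap σ : V → V → ℕ) : Prop :=
  ∀ u v : V, σ u v + σ v u = cap u v

/-- The score vector of a state: total capacity on outgoing edges of each vertex. -/
def score {V : Type*} [Fintype V] (σ : V → V → ℕ) (v : V) : ℕ := ∑ u, σ v u

/-- `u : Fin (k+1) → V` is a feasible path for a unit payment from `s` to `t` in state `σ`. -/
def FeasiblePath {V : Type*} (σ : V → V → ℕ) (s t : V) (k : ℕ) (u : Fin (k + 1) → V) : Prop :=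
  1 ≤ k ∧ Function.Injective u ∧ u 0 = s ∧ u (Fin.last k) = t ∧
    ∀ i : Fin k, 1 ≤ σ (u i.succ) (u i.castSucc)

/-- The unit transaction `(s,t)` is feasible in `σ`. -/
def Feasible {V : Type*} (σ : V → V → ℕ) (s t : V) : Prop :=
  ∃ (k : ℕ) (u : Fin (k + 1) → V), FeasiblePath σ s t k u

/-- `σ'` is the result of routing a unit payment along the path `u` in `σ`. -/
def RouteResult {V : Type*} (σ σ' : V → V → ℕ) (k : ℕ) (u : Fin (k + 1) → V) : Prop :=
  (∀ i : Fin k,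
      σ' (u i.succ) (u i.castSucc) = σ (u i.succ) (u i.castSucc) - 1 ∧
      σ' (u i.castSucc) (u i.succ) = σ (u i.castSucc) (u i.succ) + 1) ∧
  ∀ x y : V,
    (∀ i : Fin k, ¬(x = u i.succ ∧ y = u i.castSucc) ∧ ¬(x = u i.castSucc ∧ y = u i.succ)) →
    σ' x y = σ x y

/-- `σ'` is obtained from `σ` by routing a unit payment from `s` to `t` along some feasible path. -/
def RoutesUnit {V : Type*} (σ σ' : V → V → ℕ) (s t : V) : Prop :=
  ∃ (k : ℕ) (u : Fin (k + 1) → V), FeasiblePath σ s t k u ∧ RouteResult σ σ' k u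

section
variable {V : Type*} [Fintype V] [DecidableEq V]

lemma route_cast {V : Type*} [DecidableEq V] {σ σ' : V → V → ℕ} {s t : V} {k : ℕ}
    {u : Fin (k + 1) → V} (hp : FeasiblePath σ s t k u) (hr : RouteResult σ σ' k u) (x y : V) :
    (σ' x y : ℤ) = (σ x y : ℤ) + ∑ i : Fin k,
      ((if x = u i.castSucc ∧ y = u i.succ then (1:ℤ) else 0)
        - (if x = u i.succ ∧ y = u i.castSucc then (1:ℤ) else 0)) := by
  obtain ⟨hk, hinj, hu0, hul, hfeas⟩ := hp
  by_cases h1 : ∃ i : Fin k, x = u i.castSucc ∧ y = u i.succ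
  · obtain ⟨i, hx, hy⟩ := h1
    have hsum : ∑ j : Fin k,
        ((if x = u j.castSucc ∧ y = u j.succ then (1:ℤ) else 0)
          - (if x = u j.succ ∧ y = u j.castSucc then (1:ℤ) else 0)) = 1 := by
      rw [Finset.sum_eq_single i]
      · have hne : ¬ (x = u i.succ ∧ y = u i.castSucc) := by
          rintro ⟨hx', hy'⟩
          have h1 : i.castSucc = i.succ := hinj (hx.symm.trans hx')
          have := congrArg Fin.val h1
          simp [Fin.val_succ] at this
        have hne2 : u i.castSucc ≠ u i.succ := by
          intro h
          have := congrArg Fin.val (hinj h)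
          simp [Fin.val_succ] at this
        simp [hx, hy, hne, hne2, hne2.symm]
      · intro j _ hji
        have hj1 : ¬ (x = u j.castSucc ∧ y = u j.succ) := by
          rintro ⟨hx', hy'⟩
          have : j.castSucc = i.castSucc := hinj (hx'.symm.trans hx)
          exact hji (by exact_mod_cast Fin.castSucc_injective _ this)
        have hj2 : ¬ (x = u j.succ ∧ y = u j.castSucc) := by
          rintro ⟨hx', hy'⟩
          have e1 : j.succ = i.castSucc := hinj (hx'.symm.trans hx)
          have e2 : j.castSucc = i.succ := hinj (hy'.symm.trans hy)
          have v1 := congrArg Fin.val e1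
          have v2 := congrArg Fin.val e2
          simp [Fin.val_succ] at v1 v2
          omega
        simp [hj1, hj2]
      · simp
    rw [hsum, hx, hy, (hr.1 i).2]
    push_cast
    ring
  · by_cases h2 : ∃ i : Fin k, x = u i.succ ∧ y = u i.castSucc
    · obtain ⟨i, hx, hy⟩ := h2
      have hsum : ∑ j : Fin k,
          ((if x = u j.castSucc ∧ y = u j.succ then (1:ℤ) else 0)
            - (if x = u j.succ ∧ y = u j.castSucc then (1:ℤ) else 0)) = -1 := by
        rw [Finset.sum_eq_single i]
        · have hne : ¬ (x = u i.castSucc ∧ y = u i.succ) := fun h => h1 ⟨i, h⟩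
          have hne2 : u i.succ ≠ u i.castSucc := by
            intro h
            have := congrArg Fin.val (hinj h)
            simp [Fin.val_succ] at this
          simp [hx, hy, hne, hne2, hne2.symm]
        · intro j _ hji
          have hj1 : ¬ (x = u j.castSucc ∧ y = u j.succ) := fun h => h1 ⟨j, h⟩
          have hj2 : ¬ (x = u j.succ ∧ y = u j.castSucc) := by
            rintro ⟨hx', hy'⟩
            have : j.succ = i.succ := hinj (hx'.symm.trans hx)
            exact hji (by exact_mod_cast Fin.succ_injective _ this)
          simp [hj1, hj2]
        · simp
      rw [hsum, hx, hy, (hr.1 i).1]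
      have := hfeas i
      push_cast [Nat.cast_sub this]
      ring
    · have hsum : ∑ j : Fin k,
          ((if x = u j.castSucc ∧ y = u j.succ then (1:ℤ) else 0)
            - (if x = u j.succ ∧ y = u j.castSucc then (1:ℤ) else 0)) = 0 := by
        apply Finset.sum_eq_zero
        intro j _
        have hj1 : ¬ (x = u j.castSucc ∧ y = u j.succ) := fun h => h1 ⟨j, h⟩
        have hj2 : ¬ (x = u j.succ ∧ y = u j.castSucc) := fun h => h2 ⟨j, h⟩
        simp [hj1, hj2]
      rw [hsum]
      have := hr.2 x y (fun i => ⟨fun h => h2 ⟨i, h⟩, fun h => h1 ⟨i, h⟩⟩)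
      simp [this]

variable {V : Type*} [Fintype V] [DecidableEq V]
section

lemma route_isState {σ σ' : V → V → ℕ} {cap : V → V → ℕ} {k : ℕ} {u : Fin (k+1) → V}
    (hcast : ∀ x y : V, (σ' x y : ℤ) = (σ x y : ℤ) + ∑ i : Fin k,
      ((if x = u i.castSucc ∧ y = u i.succ then (1:ℤ) else 0)
        - (if x = u i.succ ∧ y = u i.castSucc then (1:ℤ) else 0)))
    (hσ : IsState cap σ) : IsState cap σ' := by
  intro x y
  have : (σ' x y : ℤ) + (σ' y x : ℤ) = (σ x y : ℤ) + (σ y x : ℤ) := by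
    rw [hcast x y, hcast y x]
    rw [show ∀ a b c d : ℤ, (a + c) + (b + d) = (a + b) + (c + d) by intros; ring]
    rw [← Finset.sum_add_distrib]
    have : ∀ i : Fin k,
        ((if x = u i.castSucc ∧ y = u i.succ then (1:ℤ) else 0)
          - (if x = u i.succ ∧ y = u i.castSucc then (1:ℤ) else 0))
        + ((if y = u i.castSucc ∧ x = u i.succ then (1:ℤ) else 0)
          - (if y = u i.succ ∧ x = u i.castSucc then (1:ℤ) else 0)) = 0 := by
      intro i
      have h1 : (x = u i.castSucc ∧ y = u i.succ) ↔ (y = u i.succ ∧ x = u i.castSucc) := and_comm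
      have h2 : (x = u i.succ ∧ y = u i.castSucc) ↔ (y = u i.castSucc ∧ x = u i.succ) := and_comm
      rw [if_congr h1 rfl rfl, if_congr h2 rfl rfl]
      ring
    rw [Finset.sum_congr rfl (fun i _ => this i), Finset.sum_const_zero]
    ring
  have : σ' x y + σ' y x = σ x y + σ y x := by exact_mod_cast this
  rw [this, hσ]
end


lemma route_score {σ σ' : V → V → ℕ} {k : ℕ} {u : Fin (k+1) → V}
    (hcast : ∀ x y : V, (σ' x y : ℤ) = (σ x y : ℤ) + ∑ i : Fin k,
      ((if x = u i.castSucc ∧ y = u i.succ then (1:ℤ) else 0)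
        - (if x = u i.succ ∧ y = u i.castSucc then (1:ℤ) else 0)))
    (v : V) :
    (score σ' v : ℤ) = (score σ v : ℤ)
      + (if v = u 0 then 1 else 0) - (if v = u (Fin.last k) then 1 else 0) := by
  have hrow : (score σ' v : ℤ) = (score σ v : ℤ)
      + ∑ i : Fin k, ((if v = u i.castSucc then (1:ℤ) else 0)
        - (if v = u i.succ then (1:ℤ) else 0)) := by
    unfold score
    push_cast
    rw [Finset.sum_congr rfl (fun y _ => hcast v y), Finset.sum_add_distrib]
    congr 1
    rw [Finset.sum_comm]
    congr 1
    funext i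
    rw [Finset.sum_sub_distrib]
    congr 1
    · by_cases h : v = u i.castSucc <;> simp [h, Finset.sum_ite_eq']
    · by_cases h : v = u i.succ <;> simp [h, Finset.sum_ite_eq']
  rw [hrow]
  set G : ℕ → ℤ := fun n => if h : n < k + 1 then (if v = u ⟨n, h⟩ then 1 else 0) else 0 with hG
  have key : ∀ i : Fin k, (if v = u i.castSucc then (1:ℤ) else 0)
      - (if v = u i.succ then (1:ℤ) else 0) = G i.val - G (i.val + 1) := by
    intro i
    have hlt1 : (i : ℕ) < k + 1 := by omega
    have hlt2 : (i : ℕ) + 1 < k + 1 := by omega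
    have e1 : (⟨(i : ℕ), hlt1⟩ : Fin (k+1)) = i.castSucc := by ext; simp
    have e2 : (⟨(i : ℕ) + 1, hlt2⟩ : Fin (k+1)) = i.succ := by ext; simp
    rw [hG]
    simp only [dif_pos hlt1, dif_pos hlt2, e1, e2]
  rw [Finset.sum_congr rfl (fun i _ => key i),
    Fin.sum_univ_eq_sum_range (fun n => G n - G (n + 1)) k,
    Finset.sum_range_sub' G k]
  have g0 : G 0 = if v = u 0 then 1 else 0 := by
    rw [hG]
    simp only [dif_pos (Nat.succ_pos k)]
    rfl
  have gk : G k = if v = u (Fin.last k) then 1 else 0 := by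
    rw [hG]
    simp only [dif_pos (Nat.lt_succ_self k)]
    rfl
  rw [g0, gk]
  ring

def Reach (σ : V → V → ℕ) (a b : V) : Prop :=
  Relation.ReflTransGen (fun x y => 1 ≤ σ y x) a b

omit [Fintype V] [DecidableEq V] in
lemma reach_of_feasible {σ : V → V → ℕ} {a b : V} (h : Feasible σ a b) :
    Reach σ a b ∧ a ≠ b := by
  obtain ⟨k, u, hk, hinj, hu0, hul, hfeas⟩ := h
  constructor
  · have : ∀ m : Fin (k + 1), Reach σ (u 0) (u m) := by
      intro m
      induction m using Fin.induction with
      | zero => exact Relation.ReflTransGen.refl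
      | succ i ih => exact Relation.ReflTransGen.tail ih (hfeas i)
    rw [← hu0, ← hul]; exact this (Fin.last k)
  · rw [← hu0, ← hul]
    intro h
    have := congrArg Fin.val (hinj h)
    simp [Fin.val_last] at this
    omega

omit [Fintype V] [DecidableEq V] in
lemma chain_dedup {r : V → V → Prop} :
    ∀ (l : List V) (a b : V), List.Chain r a l → (a :: l).getLast (by simp) = b →
      ∃ m : List V, List.Chain r a m ∧ (a :: m).getLast (by simp) = b ∧ (a :: m).Nodup := by
  intro l
  induction l with
  | nil =>
    intro a b _ hlast
    exact ⟨[], List.Chain.nil, hlast, List.nodup_singleton a⟩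
  | cons c l' ih =>
    intro a b hchain hlast
    change List.IsChain r (a :: c :: l') at hchain
    rw [List.isChain_cons_cons] at hchain
    obtain ⟨hac, hchain'⟩ := hchain
    have hlast' : (c :: l').getLast (by simp) = b := by
      rw [← hlast]; exact (List.getLast_cons (by simp)).symm
    obtain ⟨m, hm_chain, hm_last, hm_nodup⟩ := ih c b hchain' hlast'
    by_cases hmem : a ∈ c :: m
    · obtain ⟨p, q, hpq⟩ := List.append_of_mem hmem
      refine ⟨q, ?_, ?_, ?_⟩
      · have : List.Chain' r (c :: m) := hm_chain
        have hsuf : (a :: q) <:+ (c :: m) := ⟨p, hpq.symm⟩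
        exact this.suffix hsuf
      · simp only [hpq] at hm_last
        rw [← hm_last, List.getLast_append]
        simp
      · have hsub : (a :: q).Sublist (c :: m) := by
          rw [hpq]; exact List.sublist_append_right p (a :: q)
        exact hm_nodup.sublist hsub
    · refine ⟨c :: m, List.chain_cons.2 ⟨hac, hm_chain⟩, ?_, ?_⟩
      · rw [← hm_last]; exact List.getLast_cons (by simp)
      · exact List.nodup_cons.2 ⟨hmem, hm_nodup⟩

omit [Fintype V] [DecidableEq V] in
lemma feasible_of_reach {σ : V → V → ℕ} {a b : V} (h : Reach σ a b) (hne : a ≠ b) :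
    Feasible σ a b := by
  obtain ⟨l, hchain, hlast⟩ := List.exists_isChain_cons_of_relationReflTransGen h
  obtain ⟨m, hm_chain, hm_last, hm_nodup⟩ := chain_dedup l a b hchain hlast
  set L := a :: m with hL
  have hmne : m ≠ [] := by
    intro h0
    rw [h0] at hm_last
    simp at hm_last
    exact hne hm_last
  set k := m.length with hk
  have hk1 : 1 ≤ k := by
    cases m with
    | nil => exact absurd rfl hmne
    | cons _ _ => simp [hk]
  have hLlen : L.length = k + 1 := by simp [hL, hk]
  refine ⟨k, fun i => L.get (Fin.cast hLlen.symm i), hk1, ?_, ?_, ?_, ?_⟩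
  · intro i j hij
    have := List.nodup_iff_injective_get.1 hm_nodup hij
    simpa [Fin.ext_iff] using this
  · rfl
  · have hgl := List.getLast_eq_getElem (l := L) (by simp [hL])
    rw [hgl] at hm_last
    rw [← hm_last]
    congr 1 <;> simp [Fin.ext_iff, hLlen]
  · intro i
    have hchain' : List.Chain' (fun x y => 1 ≤ σ y x) L := hm_chain
    have hilt : i.val < L.length - 1 := by simp [hLlen]
    have := List.isChain_iff_getElem.1 hchain' i.val (by omega)
    simpa [Fin.ext_iff] using this

lemma reach_transfer {cap σ τ : V → V → ℕ} (hσ : IsState cap σ) (hτ : IsState cap τ)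
    (hsc : ∀ v, score σ v = score τ v) {a b : V} (h : Reach σ a b) : Reach τ a b := by
  classical
  set S : Finset V := Finset.univ.filter (fun v => Reach τ a v) with hS
  have haS : a ∈ S := by simp [hS]; exact Relation.ReflTransGen.refl
  have hclosed : ∀ u ∈ S, ∀ v, 1 ≤ τ v u → v ∈ S := by
    intro u hu v hv
    simp [hS] at hu ⊢
    exact Relation.ReflTransGen.tail hu hv
  have hcut_τ : ∀ u ∈ S, ∀ v ∈ Sᶜ, τ v u = 0 := by
    intro u hu v hv
    by_contra h0
    have : 1 ≤ τ v u := Nat.one_le_iff_ne_zero.2 h0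
    have := hclosed u hu v this
    simp at hv
    exact hv this
  have hcut_τ' : ∀ u ∈ S, ∀ v ∈ Sᶜ, τ u v = cap u v := by
    intro u hu v hv
    have := hτ u v
    rw [hcut_τ u hu v hv] at this
    omega
  -- within-S sums are equal
  have hwithin : ∀ ρ : V → V → ℕ, IsState cap ρ →
      2 * ∑ u ∈ S, ∑ v ∈ S, ρ u v = ∑ u ∈ S, ∑ v ∈ S, cap u v := by
    intro ρ hρ
    have hswap : ∑ u ∈ S, ∑ v ∈ S, ρ u v = ∑ u ∈ S, ∑ v ∈ S, ρ v u := Finset.sum_comm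
    calc 2 * ∑ u ∈ S, ∑ v ∈ S, ρ u v
        = ∑ u ∈ S, ∑ v ∈ S, ρ u v + ∑ u ∈ S, ∑ v ∈ S, ρ v u := by rw [← hswap]; ring
      _ = ∑ u ∈ S, ∑ v ∈ S, (ρ u v + ρ v u) := by
          rw [← Finset.sum_add_distrib]
          exact Finset.sum_congr rfl (fun u _ => (Finset.sum_add_distrib).symm)
      _ = ∑ u ∈ S, ∑ v ∈ S, cap u v :=
          Finset.sum_congr rfl (fun u _ => Finset.sum_congr rfl (fun v _ => hρ u v))
  have hA : ∑ u ∈ S, ∑ v ∈ S, σ u v = ∑ u ∈ S, ∑ v ∈ S, τ u v := by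
    have h1 := hwithin σ hσ
    have h2 := hwithin τ hτ
    omega
  -- total scores over S equal
  have htot : ∑ u ∈ S, score σ u = ∑ u ∈ S, score τ u :=
    Finset.sum_congr rfl (fun u _ => hsc u)
  have hsplit : ∀ ρ : V → V → ℕ,
      ∑ u ∈ S, score ρ u = ∑ u ∈ S, ∑ v ∈ S, ρ u v + ∑ u ∈ S, ∑ v ∈ Sᶜ, ρ u v := by
    intro ρ
    rw [← Finset.sum_add_distrib]
    exact Finset.sum_congr rfl (fun u _ => (Finset.sum_add_sum_compl S (ρ u)).symm)
  have hB : ∑ u ∈ S, ∑ v ∈ Sᶜ, σ u v = ∑ u ∈ S, ∑ v ∈ Sᶜ, τ u v := by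
    have h1 := hsplit σ
    have h2 := hsplit τ
    omega
  -- B_τ is the full cut capacity, and σ ≤ cap pointwise, so σ = cap on the cut
  have hBτ : ∑ u ∈ S, ∑ v ∈ Sᶜ, τ u v = ∑ u ∈ S, ∑ v ∈ Sᶜ, cap u v :=
    Finset.sum_congr rfl (fun u hu => Finset.sum_congr rfl (fun v hv => hcut_τ' u hu v hv))
  have hle : ∀ u ∈ S, ∀ v ∈ Sᶜ, σ u v ≤ cap u v := by
    intro u _ v _
    have := hσ u v
    omega
  have hcut_σ : ∀ u ∈ S, ∀ v ∈ Sᶜ, σ u v = cap u v := by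
    have h1 : ∀ u ∈ S, ∑ v ∈ Sᶜ, σ u v ≤ ∑ v ∈ Sᶜ, cap u v := fun u hu =>
      Finset.sum_le_sum (fun v hv => hle u hu v hv)
    have houter : ∑ u ∈ S, ∑ v ∈ Sᶜ, σ u v = ∑ u ∈ S, ∑ v ∈ Sᶜ, cap u v := by omega
    have h2 := (Finset.sum_eq_sum_iff_of_le h1).1 houter
    intro u hu v hv
    exact (Finset.sum_eq_sum_iff_of_le (fun v hv => hle u hu v hv)).1 (h2 u hu) v hv
  have hcut_σ0 : ∀ u ∈ S, ∀ v ∈ Sᶜ, σ v u = 0 := by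
    intro u hu v hv
    have h1 := hσ u v
    have h2 := hcut_σ u hu v hv
    omega
  -- S is closed under σ-edges, so b ∈ S
  have : ∀ c : V, Reach σ a c → c ∈ S := by
    intro c hc
    induction hc with
    | refl => exact haS
    | tail h1 h2 ih =>
      rename_i mid c'
      by_contra hcS
      have : c' ∈ Sᶜ := by simp [hcS]
      have := hcut_σ0 mid ih c' this
      omega
  have := this b h
  simp [hS] at this
  exact this

lemma routes_step {cap σ₁ σ₂ : V → V → ℕ} {s t : V}
    (h : RoutesUnit σ₁ σ₂ s t) (h1 : IsState cap σ₁) :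
    IsState cap σ₂ ∧
      (∀ v, (score σ₂ v : ℤ) = (score σ₁ v : ℤ)
        + (if v = s then 1 else 0) - (if v = t then 1 else 0)) ∧
      Feasible σ₁ s t := by
  obtain ⟨k, u, hp, hr⟩ := h
  have hc := route_cast hp hr
  refine ⟨route_isState hc h1, fun v => ?_, ⟨k, u, hp⟩⟩
  have hsc := route_score hc v
  rw [hp.2.2.1, hp.2.2.2.1] at hsc
  exact hsc

lemma feasible_transfer {cap σ τ : V → V → ℕ} (hσ : IsState cap σ) (hτ : IsState cap τ)
    (hsc : ∀ v, score σ v = score τ v) {a b : V} (hab : a ≠ b) (h : Feasible σ a b) :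
    Feasible τ a b := by
  obtain ⟨hre, _⟩ := reach_of_feasible h
  exact feasible_of_reach (reach_transfer hσ hτ hsc hre) hab

end

/-- Path independence of routing (Theorem 1 of the paper). -/
theorem stmt3 {V : Type*} [Fintype V]
    (cap : V → V → ℕ) (hcap_symm : ∀ u v : V, cap u v = cap v u)
    (hcap_diag : ∀ v : V, cap v v = 0)
    (T : ℕ) (s t : ℕ → V) (hst : ∀ i, i < T → s i ≠ t i)
    (σ : ℕ → V → V → ℕ) (hstate : IsState cap (σ 0))
    (hroute : ∀ i, i < T → RoutesUnit (σ i) (σ (i + 1)) (s i) (t i)) :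
    (∀ j, j < T → ∀ σ' : ℕ → V → V → ℕ, σ' 0 = σ 0 →
      (∀ i, i < j → RoutesUnit (σ' i) (σ' (i + 1)) (s i) (t i)) →
      Feasible (σ' j) (s j) (t j)) ∧
    (∀ σ' : ℕ → V → V → ℕ, σ' 0 = σ 0 →
      (∀ i, i < T → RoutesUnit (σ' i) (σ' (i + 1)) (s i) (t i)) →
      score (σ' T) = score (σ T) ∧
        ∀ a b : V, a ≠ b → (Feasible (σ' T) a b ↔ Feasible (σ T) a b)) := by
  classical
  have horig : ∀ i, i ≤ T → IsState cap (σ i) := by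
    intro i
    induction i with
    | zero => exact fun _ => hstate
    | succ n ih =>
      intro h
      exact (routes_step (hroute n (by omega)) (ih (by omega))).1
  have key : ∀ σ' : ℕ → V → V → ℕ, σ' 0 = σ 0 → ∀ N, N ≤ T →
      (∀ i, i < N → RoutesUnit (σ' i) (σ' (i + 1)) (s i) (t i)) →
      IsState cap (σ' N) ∧ ∀ v, score (σ' N) v = score (σ N) v := by
    intro σ' h0 N
    induction N with
    | zero => intro _ _; rw [h0]; exact ⟨hstate, fun _ => rfl⟩
    | succ n ih =>
      intro hNT hr'
      obtain ⟨hstate', hscore'⟩ := ih (by omega) (fun i hi => hr' i (by omega))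
      have s1 := routes_step (hr' n (by omega)) hstate'
      have s2 := routes_step (hroute n (by omega)) (horig n (by omega))
      refine ⟨s1.1, fun v => ?_⟩
      have e1 := s1.2.1 v
      have e2 := s2.2.1 v
      have : (score (σ' (n + 1)) v : ℤ) = (score (σ (n + 1)) v : ℤ) := by
        rw [e1, e2, hscore' v]
      exact_mod_cast this
  constructor
  · intro j hj σ' h0 hr'
    obtain ⟨hst', hsc'⟩ := key σ' h0 j (le_of_lt hj) hr'
    have hfeas : Feasible (σ j) (s j) (t j) :=
      (routes_step (hroute j hj) (horig j (le_of_lt hj))).2.2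
    exact feasible_transfer (horig j (le_of_lt hj)) hst' (fun v => (hsc' v).symm) (hst j hj) hfeas
  · intro σ' h0 hr'
    obtain ⟨hst', hsc'⟩ := key σ' h0 T le_rfl hr'
    refine ⟨funext hsc', fun a b hab => ?_⟩
    constructor
    · exact fun hf => feasible_transfer hst' (horig T le_rfl) hsc' hab hf
    · exact fun hf => feasible_transfer (horig T le_rfl) hst'
        (fun v => (hsc' v).symm) hab hf -- directions below
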